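/- arXiv:2006.11823 — 3 statements merged into one kernel-verified Lean document; each statement's English description precedes it below -/
import Mathlib

section
/- Let b > 0 and let ρ : (0,b) → ℝ be a continuous function such that ρ(t) = 1/t + O(t) as t → 0⁺. Then for each t ∈ (0,b) the function s ↦ ρ(s) − 1/s is integrable on (0,t), and the function Φ defined by Φ(t) = t·exp(∫₀ᵗ (ρ(s) − 1/s) ds) for t ∈ (0,b) and Φ(0) = 0 satisfies: Φ is differentiable on (0,b) with Φ'(t) = ρ(t)·Φ(t) for all t ∈ (0,b), Φ is continuous at 0, and Φ has right derivative equal to 1 at 0. -/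
open MeasureTheory Set Filter Topology

/-- The auxiliary function `Φ(t) = t · exp(∫₀ᵗ (ρ(s) − 1/s) ds)` (note `Φ(0) = 0`). -/
noncomputable def riccatiPhi (ρ : ℝ → ℝ) (t : ℝ) : ℝ :=
  t * Real.exp (∫ s in Set.Ioo (0:ℝ) t, (ρ s - 1 / s))

/-- If `ρ : (0,b) → ℝ` is continuous with `ρ(t) = 1/t + O(t)` as `t → 0⁺`, then
`s ↦ ρ(s) − 1/s` is integrable on `(0,t)` for each `t ∈ (0,b)`, and
`Φ(t) = t·exp(∫₀ᵗ (ρ(s) − 1/s) ds)` (with `Φ(0) = 0`) is differentiable on `(0,b)`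
with `Φ' = ρ·Φ`, is continuous at `0` from the right, and has right derivative `1`
at `0`. -/
theorem riccatiPhi_properties
    (b : ℝ) (hb : 0 < b) (ρ : ℝ → ℝ)
    (hcont : ContinuousOn ρ (Set.Ioo (0:ℝ) b))
    (hO : ∃ δ > (0:ℝ), ∃ M > (0:ℝ), ∀ t : ℝ, 0 < t → t < δ → |ρ t - 1 / t| ≤ M * t) :
    (∀ t ∈ Set.Ioo (0:ℝ) b,
        IntegrableOn (fun s => ρ s - 1 / s) (Set.Ioo (0:ℝ) t) volume) ∧
    (∀ t ∈ Set.Ioo (0:ℝ) b,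
        HasDerivAt (riccatiPhi ρ) (ρ t * riccatiPhi ρ t) t) ∧
    ContinuousWithinAt (riccatiPhi ρ) (Set.Ici (0:ℝ)) 0 ∧
    HasDerivWithinAt (riccatiPhi ρ) 1 (Set.Ici (0:ℝ)) 0 := by
  obtain ⟨δ, hδ, M, hM, hbd⟩ := hO
  set f : ℝ → ℝ := fun s => ρ s - 1 / s with hfdef
  have hfc : ContinuousOn f (Set.Ioo 0 b) := by
    apply hcont.sub
    exact continuousOn_const.div continuousOn_id (fun x hx => ne_of_gt hx.1)
  have hInt : ∀ t ∈ Set.Ioo (0:ℝ) b, IntegrableOn f (Set.Ioo (0:ℝ) t) volume := by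
    intro t ht
    set ε : ℝ := min δ t / 2 with hε
    have hε0 : 0 < ε := by
      have := lt_min hδ ht.1
      rw [hε]; linarith
    have hεδ : ε < δ := by
      have : min δ t ≤ δ := min_le_left _ _
      linarith
    have hεt : ε < t := by
      have : min δ t ≤ t := min_le_right _ _
      linarith
    have h1 : IntegrableOn f (Set.Ioo 0 ε) volume := by
      refine ⟨(hfc.mono (Set.Ioo_subset_Ioo le_rfl (le_of_lt (lt_trans hεt ht.2)))).aestronglyMeasurable
          measurableSet_Ioo,
        HasFiniteIntegral.restrict_of_bounded (C := M * ε) (by simp [Real.volume_Ioo]) ?_⟩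
      rw [ae_restrict_iff' measurableSet_Ioo]
      filter_upwards with s hs
      have h1 := hbd s hs.1 (lt_trans hs.2 hεδ)
      have h2 : |f s| ≤ M * s := h1
      calc ‖f s‖ ≤ M * s := h2
        _ ≤ M * ε := by nlinarith [hs.2]
    have h2 : IntegrableOn f (Set.Icc ε t) volume := by
      apply (hfc.mono _).integrableOn_compact isCompact_Icc
      intro x hx
      exact ⟨lt_of_lt_of_le hε0 hx.1, lt_of_le_of_lt hx.2 ht.2⟩
    exact (h1.union h2).mono_set (by
      intro s hs
      rcases lt_or_ge s ε with h | h
      · exact Or.inl ⟨hs.1, h⟩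
      · exact Or.inr ⟨h, le_of_lt hs.2⟩)
  set G : ℝ → ℝ := fun u => ∫ x in (0:ℝ)..u, f x with hGdef
  have hGeq : ∀ u : ℝ, 0 ≤ u → G u = ∫ x in Set.Ioo (0:ℝ) u, f x := by
    intro u hu
    rw [hGdef]
    simp only
    rw [intervalIntegral.integral_of_le hu, MeasureTheory.integral_Ioc_eq_integral_Ioo]
  have hPhi : ∀ u : ℝ, 0 < u → riccatiPhi ρ u = u * Real.exp (G u) := by
    intro u hu
    rw [riccatiPhi, hGeq u hu.le]
  have hδb : (0:ℝ) < min δ b := lt_min hδ hb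
  have hF0 : Tendsto (fun u => ∫ x in Set.Ioo (0:ℝ) u, f x) (nhdsWithin 0 (Set.Ici 0)) (nhds 0) := by
    apply squeeze_zero_norm' (a := fun u => M * u * u)
    · filter_upwards [self_mem_nhdsWithin,
        eventually_nhdsWithin_of_eventually_nhds (eventually_abs_sub_lt 0 hδb)] with u hu hu2
      rcases eq_or_lt_of_le (show (0:ℝ) ≤ u from hu) with h | h
      · rw [← h]; simp
      · rw [sub_zero, abs_of_pos h] at hu2
        have huδ : u < δ := lt_of_lt_of_le hu2 (min_le_left _ _)
        have hub : u < b := lt_of_lt_of_le hu2 (min_le_right _ _)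
        have hmeas : AEStronglyMeasurable f (volume.restrict (Set.Ioo (0:ℝ) u)) :=
          (hInt u ⟨h, hub⟩).aestronglyMeasurable
        have hbound : ∀ x ∈ Set.Ioo (0:ℝ) u, ‖f x‖ ≤ M * u := by
          intro x hx
          have h1 := hbd x hx.1 (lt_trans hx.2 huδ)
          have h2 : |f x| ≤ M * x := h1
          calc ‖f x‖ ≤ M * x := h2
            _ ≤ M * u := by nlinarith [hx.2]
        calc ‖∫ x in Set.Ioo (0:ℝ) u, f x‖
            ≤ M * u * (volume (Set.Ioo (0:ℝ) u)).toReal :=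
              norm_setIntegral_le_of_norm_le_const (by simp [Real.volume_Ioo]) hbound
          _ = M * u * u := by
              rw [Real.volume_Ioo, sub_zero, ENNReal.toReal_ofReal h.le]
    · have hc : Continuous (fun u : ℝ => M * u * u) := by continuity
      have := hc.tendsto 0
      simpa using this.mono_left nhdsWithin_le_nhds
  have hE : Tendsto (fun u => Real.exp (∫ x in Set.Ioo (0:ℝ) u, f x))
      (nhdsWithin 0 (Set.Ici 0)) (nhds 1) := by
    have := (Real.continuous_exp.tendsto 0).comp hF0
    simpa [Function.comp_def] using this
  refine ⟨hInt, ?_, ?_, ?_⟩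
  · -- derivative on (0,b)
    intro t ht
    have ht' : t < (t + b) / 2 := by linarith [ht.2]
    have htb : (t + b) / 2 ∈ Set.Ioo (0:ℝ) b := ⟨by linarith [ht.1], by linarith [ht.2]⟩
    have hII : IntervalIntegrable f volume 0 t := by
      rw [intervalIntegrable_iff_integrableOn_Ioc_of_le ht.1.le]
      exact (hInt _ htb).mono_set (fun x hx => ⟨hx.1, lt_of_le_of_lt hx.2 ht'⟩)
    have hG : HasDerivAt G (f t) t :=
      intervalIntegral.integral_hasDerivAt_right hII
        (hfc.stronglyMeasurableAtFilter isOpen_Ioo t ht)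
        ((hfc t ht).continuousAt (isOpen_Ioo.mem_nhds ht))
    have hD : HasDerivAt (fun u => u * Real.exp (G u))
        (1 * Real.exp (G t) + t * (Real.exp (G t) * f t)) t :=
      (hasDerivAt_id t).mul hG.exp
    have heq : riccatiPhi ρ =ᶠ[nhds t] fun u => u * Real.exp (G u) := by
      filter_upwards [isOpen_Ioi.mem_nhds ht.1] with u hu
      exact hPhi u hu
    have hfin := hD.congr_of_eventuallyEq heq
    convert hfin using 1
    · rfl
    · rfl
    rw [hPhi t ht.1, hfdef]
    have htne : t ≠ 0 := ne_of_gt ht.1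
    field_simp
    ring
  · -- continuity at 0 from the right
    have hid : Tendsto (fun u : ℝ => u) (nhdsWithin 0 (Set.Ici 0)) (nhds 0) :=
      tendsto_id.mono_left nhdsWithin_le_nhds
    have hmul := hid.mul hE
    rw [zero_mul] at hmul
    unfold ContinuousWithinAt
    have : riccatiPhi ρ 0 = 0 := by simp [riccatiPhi]
    rw [this]
    exact hmul
  · rw [hasDerivWithinAt_iff_tendsto_slope, Set.Ici_sdiff_left]
    have hE' := hE.mono_left (nhdsWithin_mono 0 Set.Ioi_subset_Ici_self)
    apply Filter.Tendsto.congr' _ hE'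
    filter_upwards [self_mem_nhdsWithin] with u hu
    have hu0 : u ≠ 0 := ne_of_gt hu
    simp only [slope_def_field, riccatiPhi, zero_mul, sub_zero]
    field_simp
    rfl
end

section
/- Let b > 0 and let Φ₁, Φ₂ : [0,b) → ℝ be twice differentiable functions with Φ₁(t) ≥ 0 and Φ₂(t) ≥ 0 for all t ∈ [0,b), and suppose there are functions q₁, q₂ : [0,b) → ℝ with q₁(t) ≤ q₂(t) and Φᵢ''(t) = qᵢ(t)·Φᵢ(t) for all t ∈ [0,b) and i = 1, 2. Then the Wronskian-type function W(t) := Φ₂'(t)·Φ₁(t) − Φ₁'(t)·Φ₂(t) is monotone nondecreasing on [0,b). In particular, if in addition Φ₁(0) = Φ₂(0) = 0 and Φ₁(t) > 0, Φ₂(t) > 0 for all t ∈ (0,b), then Φ₁'(t)/Φ₁(t) ≤ Φ₂'(t)/Φ₂(t) for all t ∈ (0,b). -/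
/-- **Sturm-type Wronskian comparison.** If `Φ₁, Φ₂ ≥ 0` on `[0,b)` satisfy
`Φᵢ'' = qᵢ·Φᵢ` with `q₁ ≤ q₂`, then `W = Φ₂'·Φ₁ − Φ₁'·Φ₂` is monotone nondecreasing
on `[0,b)`; if moreover `Φ₁(0) = Φ₂(0) = 0` and `Φ₁, Φ₂ > 0` on `(0,b)`, then the
logarithmic derivatives are comparable: `Φ₁'/Φ₁ ≤ Φ₂'/Φ₂` on `(0,b)`. -/
theorem wronskian_comparison
    (b : ℝ) (hb : 0 < b) (Φ₁ Φ₂ Φ₁' Φ₂' q₁ q₂ : ℝ → ℝ)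
    (hΦ₁ : ∀ t ∈ Set.Ico (0:ℝ) b, HasDerivWithinAt Φ₁ (Φ₁' t) (Set.Ico 0 b) t)
    (hΦ₂ : ∀ t ∈ Set.Ico (0:ℝ) b, HasDerivWithinAt Φ₂ (Φ₂' t) (Set.Ico 0 b) t)
    (hΦ₁'' : ∀ t ∈ Set.Ico (0:ℝ) b,
      HasDerivWithinAt Φ₁' (q₁ t * Φ₁ t) (Set.Ico 0 b) t)
    (hΦ₂'' : ∀ t ∈ Set.Ico (0:ℝ) b,
      HasDerivWithinAt Φ₂' (q₂ t * Φ₂ t) (Set.Ico 0 b) t)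
    (hΦ₁pos : ∀ t ∈ Set.Ico (0:ℝ) b, 0 ≤ Φ₁ t)
    (hΦ₂pos : ∀ t ∈ Set.Ico (0:ℝ) b, 0 ≤ Φ₂ t)
    (hq : ∀ t ∈ Set.Ico (0:ℝ) b, q₁ t ≤ q₂ t) :
    MonotoneOn (fun t => Φ₂' t * Φ₁ t - Φ₁' t * Φ₂ t) (Set.Ico (0:ℝ) b) ∧
    ((Φ₁ 0 = 0 ∧ Φ₂ 0 = 0 ∧ (∀ t ∈ Set.Ioo (0:ℝ) b, 0 < Φ₁ t) ∧
        (∀ t ∈ Set.Ioo (0:ℝ) b, 0 < Φ₂ t)) →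
      ∀ t ∈ Set.Ioo (0:ℝ) b, Φ₁' t / Φ₁ t ≤ Φ₂' t / Φ₂ t) := by
  have hconv : Convex ℝ (Set.Ico (0:ℝ) b) := convex_Ico 0 b
  have hW : ∀ t ∈ Set.Ico (0:ℝ) b,
      HasDerivWithinAt (fun t => Φ₂' t * Φ₁ t - Φ₁' t * Φ₂ t)
        ((q₂ t - q₁ t) * (Φ₁ t * Φ₂ t)) (Set.Ico 0 b) t := by
    intro t ht
    have h := ((hΦ₂'' t ht).mul (hΦ₁ t ht)).sub ((hΦ₁'' t ht).mul (hΦ₂ t ht))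
    refine h.congr_deriv ?_
    ring
  have hcont : ContinuousOn (fun t => Φ₂' t * Φ₁ t - Φ₁' t * Φ₂ t) (Set.Ico (0:ℝ) b) :=
    fun t ht => (hW t ht).continuousWithinAt
  have hmono : MonotoneOn (fun t => Φ₂' t * Φ₁ t - Φ₁' t * Φ₂ t) (Set.Ico (0:ℝ) b) := by
    apply monotoneOn_of_deriv_nonneg hconv hcont
    · intro t ht
      rw [interior_Ico] at ht
      exact ((hW t (Set.mem_Ico.mpr ⟨le_of_lt ht.1, ht.2⟩)).hasDerivAt
        (Ico_mem_nhds ht.1 ht.2)).differentiableAt.differentiableWithinAt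
    · intro t ht
      rw [interior_Ico] at ht
      have ht' : t ∈ Set.Ico (0:ℝ) b := ⟨le_of_lt ht.1, ht.2⟩
      rw [((hW t ht').hasDerivAt (Ico_mem_nhds ht.1 ht.2)).deriv]
      exact mul_nonneg (sub_nonneg.mpr (hq t ht'))
        (mul_nonneg (hΦ₁pos t ht') (hΦ₂pos t ht'))
  refine ⟨hmono, ?_⟩
  rintro ⟨h10, h20, h1p, h2p⟩ t ht
  have ht' : t ∈ Set.Ico (0:ℝ) b := ⟨le_of_lt ht.1, ht.2⟩
  have h0 : (0:ℝ) ∈ Set.Ico (0:ℝ) b := ⟨le_refl 0, hb⟩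
  have hWt := hmono h0 ht' (le_of_lt ht.1)
  simp only [h10, h20, mul_zero, sub_zero] at hWt
  rw [div_le_div_iff₀ (h1p t ht) (h2p t ht)]
  linarith
end

section
/- Let m > 0 and let a₁, a₂ : [0,m) → ℝ be differentiable functions such that a₁'(t) + a₁(t)² ≤ a₂'(t) + a₂(t)² for all t ∈ [0,m) and a₁(0) ≤ a₂(0). Then a₁(t) ≤ a₂(t) for all t ∈ [0,m). -/
open Set intervalIntegral MeasureTheory

/-- **Riccati comparison with initial condition.** If `a₁, a₂ : [0,m) → ℝ` are
differentiable with `a₁' + a₁² ≤ a₂' + a₂²` on `[0,m)` and `a₁(0) ≤ a₂(0)`,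
then `a₁ ≤ a₂` on `[0,m)`. -/
theorem riccati_comparison_initial
    (m : ℝ) (hm : 0 < m) (a₁ a₂ a₁' a₂' : ℝ → ℝ)
    (hd₁ : ∀ t ∈ Set.Ico (0:ℝ) m, HasDerivWithinAt a₁ (a₁' t) (Set.Ico 0 m) t)
    (hd₂ : ∀ t ∈ Set.Ico (0:ℝ) m, HasDerivWithinAt a₂ (a₂' t) (Set.Ico 0 m) t)
    (hcmp : ∀ t ∈ Set.Ico (0:ℝ) m, a₁' t + (a₁ t) ^ 2 ≤ a₂' t + (a₂ t) ^ 2)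
    (h0 : a₁ 0 ≤ a₂ 0) :
    ∀ t ∈ Set.Ico (0:ℝ) m, a₁ t ≤ a₂ t := by
  set D : Set ℝ := Set.Ico (0:ℝ) m with hD
  have hDconv : Convex ℝ D := convex_Ico 0 m
  set g : ℝ → ℝ := fun t => a₁ t + a₂ t with hg
  -- g is continuous on D
  have hgcont : ContinuousOn g D := fun t ht =>
    ((hd₁ t ht).continuousWithinAt.add (hd₂ t ht).continuousWithinAt)
  -- g has derivatives at interior points (full HasDerivAt for a₁, a₂)
  have hint : interior D = Set.Ioo 0 m := interior_Ico
  have hmemD : ∀ t ∈ Set.Ioo (0:ℝ) m, D ∈ nhds t := fun t ht =>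
    Ico_mem_nhds ht.1 ht.2
  have hgC : ∀ t ∈ Set.Ioo (0:ℝ) m, ContinuousAt g t := by
    intro t ht
    have ht' : t ∈ D := Ioo_subset_Ico_self ht
    exact (((hd₁ t ht').hasDerivAt (hmemD t ht)).continuousAt.add
      ((hd₂ t ht').hasDerivAt (hmemD t ht)).continuousAt)
  -- integrability of g on [0, t] for t ∈ D
  have hgint : ∀ t ∈ D, IntervalIntegrable g volume 0 t := by
    intro t ht
    apply ContinuousOn.intervalIntegrable
    rw [Set.uIcc_of_le ht.1]
    exact hgcont.mono (fun x hx => ⟨hx.1, lt_of_le_of_lt hx.2 ht.2⟩)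
  set I : ℝ → ℝ := fun t => ∫ x in (0:ℝ)..t, g x with hI
  -- derivative of I within D
  have hIder : ∀ t ∈ D, HasDerivWithinAt I (g t) D t := by
    intro t ht
    rcases eq_or_lt_of_le ht.1 with h0t | h0t
    · -- t = 0 : use the right-derivative version on Ici 0, then restrict
      subst h0t
      have hmemIci : D ∈ nhdsWithin (0:ℝ) (Set.Ici 0) := by
        rw [hD, show Set.Ico (0:ℝ) m = Set.Ici 0 ∩ Set.Iio m from (Set.Ici_inter_Iio).symm]
        exact inter_mem_nhdsWithin _ (Iio_mem_nhds hm)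
      have hmeas : StronglyMeasurableAtFilter g (nhdsWithin (0:ℝ) (Set.Ioi 0)) volume :=
        ⟨D, nhdsWithin_mono 0 Set.Ioi_subset_Ici_self hmemIci,
          hgcont.aestronglyMeasurable measurableSet_Ico⟩
      have hcontw : ContinuousWithinAt g (Set.Ioi (0:ℝ)) 0 :=
        (((hgcont 0 ht).mono_of_mem_nhdsWithin hmemIci)).mono Set.Ioi_subset_Ici_self
      have := intervalIntegral.integral_hasDerivWithinAt_right (f := g)
        (s := Set.Ici 0) (t := Set.Ioi 0) (hgint 0 ht) hmeas hcontw
      exact this.mono (fun x hx => hx.1)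
    · -- interior point : full derivative
      have htI : t ∈ Set.Ioo (0:ℝ) m := ⟨h0t, ht.2⟩
      have hmeas : StronglyMeasurableAtFilter g (nhds t) volume := by
        refine ⟨Set.Ioo 0 m, Ioo_mem_nhds htI.1 htI.2, ?_⟩
        exact (hgcont.mono Ioo_subset_Ico_self).aestronglyMeasurable measurableSet_Ioo
      exact (intervalIntegral.integral_hasDerivAt_right (hgint t ht) hmeas
        (hgC t htI)).hasDerivWithinAt
  -- the auxiliary function F
  set F : ℝ → ℝ := fun t => (a₂ t - a₁ t) * Real.exp (I t) with hF
  have hFder : ∀ t ∈ D, HasDerivWithinAt F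
      ((a₂' t - a₁' t + g t * (a₂ t - a₁ t)) * Real.exp (I t)) D t := by
    intro t ht
    have h1 : HasDerivWithinAt (fun s => a₂ s - a₁ s) (a₂' t - a₁' t) D t :=
      (hd₂ t ht).sub (hd₁ t ht)
    have h2 : HasDerivWithinAt (fun s => Real.exp (I s)) (Real.exp (I t) * g t) D t :=
      (hIder t ht).exp
    have : HasDerivWithinAt (fun s => (a₂ s - a₁ s) * Real.exp (I s))
        ((a₂' t - a₁' t) * Real.exp (I t) + (a₂ t - a₁ t) * (Real.exp (I t) * g t)) D t :=
      h1.mul h2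
    convert this using 1
    ring
  have hFcont : ContinuousOn F D := fun t ht => (hFder t ht).continuousWithinAt
  -- F is monotone on D
  have hFmono : MonotoneOn F D := by
    apply monotoneOn_of_hasDerivWithinAt_nonneg hDconv hFcont
      (f' := fun t => (a₂' t - a₁' t + g t * (a₂ t - a₁ t)) * Real.exp (I t))
    · intro x hx
      exact (hFder x (interior_subset hx)).mono interior_subset
    · intro x hx
      have hx' : x ∈ D := interior_subset hx
      have hkey : 0 ≤ a₂' x - a₁' x + (a₁ x + a₂ x) * (a₂ x - a₁ x) := by
        nlinarith [hcmp x hx']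
      exact mul_nonneg hkey (Real.exp_pos _).le
  -- conclude
  intro t ht
  have h0D : (0:ℝ) ∈ D := ⟨le_refl 0, hm⟩
  have hF0 : 0 ≤ F 0 := by
    have : I 0 = 0 := intervalIntegral.integral_same
    rw [hF]
    exact mul_nonneg (by linarith) (Real.exp_pos _).le
  have : F 0 ≤ F t := hFmono h0D ht ht.1
  have hFt : 0 ≤ F t := le_trans hF0 this
  have h2 : 0 ≤ (a₂ t - a₁ t) * Real.exp (I t) := hFt
  nlinarith [Real.exp_pos (I t), h2]
end
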